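/- arXiv:2209.11638 — 2 statements merged into one kernel-verified Lean document; each statement's English description precedes it below -/
import Mathlib

section
/- The first-order condition for the GSP-MAP filter f₁: the diagonal matrix F₁ minimizing trace(C_x (I + F₁) C_x⁻¹ (I + F₁)) + trace(C_x F₁ A F₁) over diagonal matrices F₁, where A = G̃ᵀ C_w⁻¹ G̃ and C_x, C_w positive definite, satisfies diag(F₁) = −(C_x ∘ C_x⁻¹ + C_x ∘ A)⁻¹ 1, provided C_x ∘ (C_x⁻¹ + A) is invertible. -/
open Matrix

lemma gsp_tr4 {N : ℕ} (P Q : Matrix (Fin N) (Fin N) ℝ) (v : Fin N → ℝ) :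
    trace (P * diagonal v * Q * diagonal v) = ∑ i, ∑ j, v i * (P i j * Q j i) * v j := by
  simp only [Matrix.trace, Matrix.diag, Matrix.mul_diagonal]
  simp only [Matrix.mul_apply, Matrix.mul_diagonal, Finset.sum_mul]
  refine Finset.sum_congr rfl fun i _ => Finset.sum_congr rfl fun j _ => ?_
  simp [Matrix.diagonal_apply, mul_ite, ite_mul, zero_mul, mul_zero, Finset.sum_ite_eq']
  ring

lemma gsp_foc_aux (a b : ℝ) (h : ∀ t : ℝ, 0 ≤ a * t + b * t ^ 2) : a = 0 := by
  by_contra ha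
  have hb : (0:ℝ) < |b| + 1 := by positivity
  set c : ℝ := 1 / (|b| + 1) with hc_def
  have hc : 0 < c := by positivity
  have hbc : b * c < 1 := by
    have h1 : b * c ≤ |b| * c := mul_le_mul_of_nonneg_right (le_abs_self b) hc.le
    have h2 : |b| * c < 1 := by
      rw [hc_def, mul_one_div]
      exact (div_lt_one hb).2 (by linarith [abs_nonneg b])
    linarith
  have h1 := h (-a * c)
  have ha2 : (0:ℝ) < a ^ 2 := by positivity
  nlinarith [mul_pos ha2 hc, mul_pos (mul_pos ha2 hc) hc]

lemma gsp_quad_diff {N : ℕ} (M : Matrix (Fin N) (Fin N) ℝ) (hM : ∀ i j, M i j = M j i)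
    (v u : Fin N → ℝ) (k : Fin N) (t : ℝ) (hu : u = v + Pi.single k t) :
    (∑ i, ∑ j, u i * M i j * u j)
      = (∑ i, ∑ j, v i * M i j * v j) + (2 * ((M *ᵥ v) k)) * t + M k k * t ^ 2 := by
  subst hu
  simp only [Pi.add_apply, Pi.single_apply, Matrix.mulVec, dotProduct]
  simp only [add_mul, mul_add, ite_mul, mul_ite, zero_mul, mul_zero,
    Finset.sum_add_distrib, Finset.sum_ite_eq, Finset.sum_ite_eq', Finset.mem_univ, if_true]
  have e1 : (∑ x : Fin N, ∑ y : Fin N, if x = k then t * M x y * v y else 0)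
      = ∑ y, t * M k y * v y := by
    rw [Finset.sum_congr rfl (fun x _ =>
      show (∑ y, if x = k then t * M x y * v y else 0)
        = if x = k then ∑ y, t * M x y * v y else 0 by split <;> simp)]
    simp
  have e2 : (∑ x, v x * M x k * t) = ∑ x, M k x * v x * t :=
    Finset.sum_congr rfl fun x _ => by rw [hM x k]; ring
  have e3 : (∑ y, t * M k y * v y) + (∑ x, M k x * v x * t)
      = (∑ i, 2 * (M k i * v i)) * t := by
    rw [Finset.sum_mul, ← Finset.sum_add_distrib]
    exact Finset.sum_congr rfl fun i _ => by ring
  rw [e1, e2]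
  have e4 : (2 : ℝ) * (∑ i, M k i * v i) = ∑ i, 2 * (M k i * v i) := by
    rw [Finset.mul_sum]
  rw [e4]
  linear_combination e3

/-- First-order condition for the GSP-MAP filter `f₁`: any diagonal minimizer of
`trace(C_x (I + F₁) C_x⁻¹ (I + F₁)) + trace(C_x F₁ A F₁)` over diagonal matrices,
with `A = G̃ᵀ C_w⁻¹ G̃`, has diagonal `−(C_x ∘ C_x⁻¹ + C_x ∘ A)⁻¹ 1`. -/
theorem gsp_map_filter1_foc {N : ℕ}
    (Cx Cw Gt : Matrix (Fin N) (Fin N) ℝ)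
    (hCx : Cx.PosDef) (hCw : Cw.PosDef) :
    let A : Matrix (Fin N) (Fin N) ℝ := Gtᵀ * Cw⁻¹ * Gt
    let J : (Fin N → ℝ) → ℝ := fun v =>
      Matrix.trace (Cx * (1 + Matrix.diagonal v) * Cx⁻¹ * (1 + Matrix.diagonal v)) +
        Matrix.trace (Cx * Matrix.diagonal v * A * Matrix.diagonal v)
    IsUnit (Matrix.hadamard Cx (Cx⁻¹ + A)) →
      ∀ v : Fin N → ℝ, (∀ u, J v ≤ J u) →
        v = -((Matrix.hadamard Cx Cx⁻¹ + Matrix.hadamard Cx A)⁻¹ *ᵥ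
          (fun _ => (1 : ℝ))) := by
  intro A J hU v hmin
  have hdet : IsUnit Cx.det := (Matrix.isUnit_iff_isUnit_det Cx).mp hCx.isUnit
  have hinv : Cx * Cx⁻¹ = 1 := Matrix.mul_nonsing_inv _ hdet
  have hinv' : Cx⁻¹ * Cx = 1 := Matrix.nonsing_inv_mul _ hdet
  have hCxT : Cxᵀ = Cx := by simpa [Matrix.IsSymm] using hCx.1
  have hCwT : Cwᵀ = Cw := by simpa [Matrix.IsSymm] using hCw.1
  have hCxiT : (Cx⁻¹)ᵀ = Cx⁻¹ := by rw [Matrix.transpose_nonsing_inv, hCxT]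
  have hCwiT : (Cw⁻¹)ᵀ = Cw⁻¹ := by rw [Matrix.transpose_nonsing_inv, hCwT]
  have hAT : Aᵀ = A := by
    show (Gtᵀ * Cw⁻¹ * Gt)ᵀ = _
    rw [Matrix.transpose_mul, Matrix.transpose_mul, Matrix.transpose_transpose, hCwiT,
      ← Matrix.mul_assoc]
  set M : Matrix (Fin N) (Fin N) ℝ := Matrix.hadamard Cx (Cx⁻¹ + A) with hMdef
  have hCxs : ∀ i j, Cx i j = Cx j i := fun i j => by
    conv_lhs => rw [← hCxT, Matrix.transpose_apply]
  have hCxis : ∀ i j, Cx⁻¹ i j = Cx⁻¹ j i := fun i j => by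
    conv_lhs => rw [← hCxiT, Matrix.transpose_apply]
  have hAs : ∀ i j, A i j = A j i := fun i j => by
    conv_lhs => rw [← hAT, Matrix.transpose_apply]
  have hMsymm : ∀ i j, M i j = M j i := fun i j => by
    simp only [hMdef, Matrix.hadamard_apply, Matrix.add_apply]
    rw [hCxs i j, hCxis i j, hAs i j]
  -- closed form of J
  have hJ : ∀ u : Fin N → ℝ, J u = trace ((1 : Matrix (Fin N) (Fin N) ℝ)) + 2 * (∑ i, u i)
      + ∑ i, ∑ j, u i * M i j * u j := by
    intro u
    show Matrix.trace (Cx * (1 + Matrix.diagonal u) * Cx⁻¹ * (1 + Matrix.diagonal u)) +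
        Matrix.trace (Cx * Matrix.diagonal u * A * Matrix.diagonal u) = _
    set D := diagonal u with hD
    have hexp : Cx * (1 + D) * Cx⁻¹ * (1 + D)
        = Cx * Cx⁻¹ + Cx * Cx⁻¹ * D + Cx * D * Cx⁻¹ + Cx * D * Cx⁻¹ * D := by
      noncomm_ring
    rw [hexp, Matrix.trace_add, Matrix.trace_add, Matrix.trace_add, hinv]
    have h2 : trace ((1 : Matrix (Fin N) (Fin N) ℝ) * D) = ∑ i, u i := by
      rw [Matrix.one_mul, hD, Matrix.trace_diagonal]
    have h3 : trace (Cx * D * Cx⁻¹) = ∑ i, u i := by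
      rw [Matrix.trace_mul_comm, ← Matrix.mul_assoc, hinv', Matrix.one_mul, hD,
        Matrix.trace_diagonal]
    rw [h2, h3, hD, gsp_tr4, gsp_tr4]
    have hq : (∑ i, ∑ j, u i * (Cx i j * Cx⁻¹ j i) * u j)
        + (∑ i, ∑ j, u i * (Cx i j * A j i) * u j)
        = ∑ i, ∑ j, u i * M i j * u j := by
      rw [← Finset.sum_add_distrib]
      refine Finset.sum_congr rfl fun i _ => ?_
      rw [← Finset.sum_add_distrib]
      refine Finset.sum_congr rfl fun j _ => ?_
      rw [hCxis j i, hAs j i]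
      simp only [hMdef, Matrix.hadamard_apply, Matrix.add_apply]
      ring
    linarith [hq]
  -- first-order condition
  have hfoc : ∀ k, (M *ᵥ v) k + 1 = 0 := by
    intro k
    have key : 2 * ((M *ᵥ v) k) + 2 = 0 := by
      apply gsp_foc_aux _ (M k k)
      intro t
      have h := hmin (fun i => v i + (Pi.single k t : Fin N → ℝ) i)
      rw [hJ, hJ] at h
      rw [gsp_quad_diff M hMsymm v (fun i => v i + (Pi.single k t : Fin N → ℝ) i) k t (funext fun i => rfl)] at h
      have hsum : (∑ i, (v i + (Pi.single k t : Fin N → ℝ) i)) = (∑ i, v i) + t := by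
        simp [Finset.sum_add_distrib, Pi.single_apply, Finset.sum_ite_eq']
      rw [hsum] at h
      nlinarith [h]
    linarith
  -- conclude via inverse
  have hMv : M *ᵥ v = fun _ => (-1 : ℝ) := funext fun k => by have := hfoc k; linarith
  have hMdet : IsUnit M.det := (Matrix.isUnit_iff_isUnit_det M).mp hU
  have hv : M⁻¹ *ᵥ (M *ᵥ v) = v := by
    rw [Matrix.mulVec_mulVec, Matrix.nonsing_inv_mul _ hMdet, Matrix.one_mulVec]
  have hM2 : Matrix.hadamard Cx Cx⁻¹ + Matrix.hadamard Cx A = M := by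
    rw [hMdef, Matrix.hadamard_add]
  rw [← hv, hMv, hM2]
  rw [show (fun _ : Fin N => (-1:ℝ)) = -(fun _ : Fin N => (1:ℝ)) from funext fun _ => by
    norm_num, Matrix.mulVec_neg]
end

section
/- The first-order condition for the GSP-MAP filter f₂: the diagonal matrix F₂ minimizing ½ trace(C_w F₂ C_x⁻¹ F₂) − trace(G̃ F₂) + ½ trace(C_w F₂ A F₂) over diagonal matrices F₂, with A = G̃ᵀ C_w⁻¹ G̃, satisfies diag(F₂) = (C_w ∘ C_x⁻¹ + C_w ∘ A)⁻¹ diag(G̃), provided C_w ∘ (C_x⁻¹ + A) is invertible. -/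
open Matrix

lemma quad_zero_aux (a b : ℝ) (h : ∀ t : ℝ, 0 ≤ a * t^2 + b * t) : b = 0 := by
  have h1 := h 1; have h2 := h (-1)
  have ha : 0 ≤ a := by nlinarith
  rcases eq_or_lt_of_le ha with ha0 | ha0
  · nlinarith
  · have key := h (-(b/(2*a)))
    have e1 : a * (-(b/(2*a)))^2 = b^2/(4*a) := by field_simp; ring
    have e2 : b * -(b / (2 * a)) = -(b^2/(2*a)) := by field_simp
    rw [e1, e2] at key
    have heq : b ^ 2 / (4 * a) + -(b ^ 2 / (2 * a)) = -(b^2)/(4*a) := by field_simp; ring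
    rw [heq] at key
    rcases div_nonneg_iff.mp key with ⟨h3,_⟩|⟨_,h4⟩
    · nlinarith [sq_nonneg b]
    · linarith

lemma trace_form_aux {N : ℕ} (C B : Matrix (Fin N) (Fin N) ℝ) (a b : Fin N → ℝ) :
    Matrix.trace (C * Matrix.diagonal a * B * Matrix.diagonal b)
      = ∑ k, ∑ l, C k l * a l * B l k * b k := by
  simp [Matrix.trace, Matrix.diag, Matrix.mul_apply, Matrix.diagonal_apply, mul_ite, ite_mul,
    Finset.sum_mul, Finset.mul_sum]

lemma trace_gd_aux {N : ℕ} (G : Matrix (Fin N) (Fin N) ℝ) (b : Fin N → ℝ) :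
    Matrix.trace (G * Matrix.diagonal b) = ∑ k, G k k * b k := by
  simp [Matrix.trace, Matrix.diag, Matrix.mul_diagonal]

lemma expand_quad_aux {N : ℕ} (C B : Matrix (Fin N) (Fin N) ℝ) (v : Fin N → ℝ) (i : Fin N)
    (t : ℝ) :
    (∑ k, ∑ l, C k l * (v + t • (Pi.single i 1 : Fin N → ℝ)) l * B l k
        * (v + t • (Pi.single i 1 : Fin N → ℝ)) k)
      = (∑ k, ∑ l, C k l * v l * B l k * v k)
        + ((∑ l, C i l * v l * B l i) + (∑ k, C k i * B i k * v k)) * t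
        + (C i i * B i i) * t^2 := by
  have key : ∀ k l : Fin N, C k l * ((v + t • (Pi.single i 1 : Fin N → ℝ)) l) * B l k
        * ((v + t • (Pi.single i 1 : Fin N → ℝ)) k)
      = C k l * v l * B l k * v k
        + (C k l * v l * B l k * (Pi.single i 1 : Fin N → ℝ) k) * t
        + (C k l * (Pi.single i 1 : Fin N → ℝ) l * B l k * v k) * t
        + (C k l * (Pi.single i 1 : Fin N → ℝ) l * B l k
            * (Pi.single i 1 : Fin N → ℝ) k) * t^2 := by
    intro k l
    simp only [Pi.add_apply, Pi.smul_apply, smul_eq_mul]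
    ring
  simp only [key, Finset.sum_add_distrib]
  simp only [Pi.single_apply, mul_ite, ite_mul, mul_one, mul_zero, zero_mul, one_mul,
    Finset.sum_ite_eq, Finset.sum_ite_eq', Finset.mem_univ, if_true, Finset.sum_ite_irrel,
    Finset.sum_const_zero, ← Finset.sum_mul]
  ring

lemma expand_lin_aux {N : ℕ} (G : Matrix (Fin N) (Fin N) ℝ) (v : Fin N → ℝ) (i : Fin N)
    (t : ℝ) :
    (∑ k, G k k * (v + t • (Pi.single i 1 : Fin N → ℝ)) k)
      = (∑ k, G k k * v k) + G i i * t := by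
  have key : ∀ k : Fin N, G k k * (v + t • (Pi.single i 1 : Fin N → ℝ)) k
      = G k k * v k + (G k k * (Pi.single i 1 : Fin N → ℝ) k) * t := by
    intro k; simp only [Pi.add_apply, Pi.smul_apply, smul_eq_mul]; ring
  simp only [key, Finset.sum_add_distrib]
  simp only [Pi.single_apply, mul_ite, ite_mul, mul_one, mul_zero, zero_mul, one_mul,
    Finset.sum_ite_eq, Finset.sum_ite_eq', Finset.mem_univ, if_true, ← Finset.sum_mul]

/-- First-order condition for the GSP-MAP filter `f₂`: any diagonal minimizer of
`½ trace(C_w F₂ C_x⁻¹ F₂) − trace(G̃ F₂) + ½ trace(C_w F₂ A F₂)` over diagonal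
matrices, with `A = G̃ᵀ C_w⁻¹ G̃`, has diagonal
`(C_w ∘ C_x⁻¹ + C_w ∘ A)⁻¹ diag(G̃)`. -/
theorem gsp_map_filter2_foc {N : ℕ}
    (Cx Cw Gt : Matrix (Fin N) (Fin N) ℝ)
    (hCx : Cx.PosDef) (hCw : Cw.PosDef) :
    let A : Matrix (Fin N) (Fin N) ℝ := Gtᵀ * Cw⁻¹ * Gt
    let J : (Fin N → ℝ) → ℝ := fun v =>
      (1 / 2) * Matrix.trace (Cw * Matrix.diagonal v * Cx⁻¹ * Matrix.diagonal v) -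
        Matrix.trace (Gt * Matrix.diagonal v) +
        (1 / 2) * Matrix.trace (Cw * Matrix.diagonal v * A * Matrix.diagonal v)
    IsUnit (Matrix.hadamard Cw (Cx⁻¹ + A)) →
      ∀ v : Fin N → ℝ, (∀ u, J v ≤ J u) →
        v = (Matrix.hadamard Cw Cx⁻¹ + Matrix.hadamard Cw A)⁻¹ *ᵥ
          (fun i => Gt i i) := by
  intro A J hM v hmin
  have hAdef : A = Gtᵀ * Cw⁻¹ * Gt := rfl
  -- symmetry facts
  have hCwT : Cwᵀ = Cw := hCw.isHermitian.eq
  have hCwS : ∀ k l, Cw l k = Cw k l := by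
    intro k l
    have h := congrFun (congrFun hCwT k) l
    rwa [Matrix.transpose_apply] at h
  have hCwiT : (Cw⁻¹)ᵀ = Cw⁻¹ := by
    rw [Matrix.transpose_nonsing_inv, hCwT]
  have hCxT : Cxᵀ = Cx := hCx.isHermitian.eq
  have hCxiT : (Cx⁻¹)ᵀ = Cx⁻¹ := by
    rw [Matrix.transpose_nonsing_inv, hCxT]
  have hAT : Aᵀ = A := by
    rw [hAdef, Matrix.transpose_mul, Matrix.transpose_mul, Matrix.transpose_transpose, hCwiT,
      Matrix.mul_assoc]
  have hBT : (Cx⁻¹ + A)ᵀ = Cx⁻¹ + A := by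
    rw [Matrix.transpose_add, hCxiT, hAT]
  have hBS : ∀ k l, (Cx⁻¹ + A) l k = (Cx⁻¹ + A) k l := by
    intro k l
    have h := congrFun (congrFun hBT k) l
    rwa [Matrix.transpose_apply] at h
  -- sum form of J
  have hJ : ∀ u : Fin N → ℝ, J u
      = (1/2) * (∑ k, ∑ l, Cw k l * u l * (Cx⁻¹ + A) l k * u k) - ∑ k, Gt k k * u k := by
    intro u
    show (1 / 2) * Matrix.trace (Cw * Matrix.diagonal u * Cx⁻¹ * Matrix.diagonal u) -
        Matrix.trace (Gt * Matrix.diagonal u) +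
        (1 / 2) * Matrix.trace (Cw * Matrix.diagonal u * A * Matrix.diagonal u) = _
    rw [trace_form_aux, trace_form_aux, trace_gd_aux]
    have hSB : (∑ k, ∑ l, Cw k l * u l * (Cx⁻¹ + A) l k * u k)
        = (∑ k, ∑ l, Cw k l * u l * Cx⁻¹ l k * u k)
          + (∑ k, ∑ l, Cw k l * u l * A l k * u k) := by
      rw [← Finset.sum_add_distrib]
      refine Finset.sum_congr rfl fun k _ => ?_
      rw [← Finset.sum_add_distrib]
      refine Finset.sum_congr rfl fun l _ => ?_
      rw [Matrix.add_apply]; ring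
    rw [hSB]; ring
  -- first-order condition
  have hfoc : ∀ i, (∑ l, Cw i l * (Cx⁻¹ + A) i l * v l) = Gt i i := by
    intro i
    have hq : ∀ t : ℝ, 0 ≤ ((1/2) * (Cw i i * (Cx⁻¹ + A) i i)) * t^2
        + ((1/2) * ((∑ l, Cw i l * v l * (Cx⁻¹ + A) l i)
            + (∑ k, Cw k i * (Cx⁻¹ + A) i k * v k)) - Gt i i) * t := by
      intro t
      have h := hmin (v + t • (Pi.single i 1 : Fin N → ℝ))
      rw [hJ v, hJ _, expand_quad_aux, expand_lin_aux] at h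
      nlinarith [h]
    have hb := quad_zero_aux _ _ hq
    have hs1 : (∑ l, Cw i l * v l * (Cx⁻¹ + A) l i) = ∑ l, Cw i l * (Cx⁻¹ + A) i l * v l := by
      refine Finset.sum_congr rfl fun l _ => ?_
      rw [hBS i l]; ring
    have hs2 : (∑ k, Cw k i * (Cx⁻¹ + A) i k * v k) = ∑ l, Cw i l * (Cx⁻¹ + A) i l * v l := by
      refine Finset.sum_congr rfl fun k _ => ?_
      rw [hCwS i k]
    rw [hs1, hs2] at hb
    linarith
  -- conclude
  have hMv : (Matrix.hadamard Cw (Cx⁻¹ + A)) *ᵥ v = (fun i => Gt i i) := by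
    funext i
    have : ((Matrix.hadamard Cw (Cx⁻¹ + A)) *ᵥ v) i = ∑ l, Cw i l * (Cx⁻¹ + A) i l * v l := by
      simp [Matrix.mulVec, dotProduct, Matrix.hadamard]
    rw [this, hfoc i]
  have hd := (Matrix.isUnit_iff_isUnit_det _).mp hM
  rw [← Matrix.hadamard_add, ← hMv, Matrix.mulVec_mulVec, Matrix.nonsing_inv_mul _ hd,
    Matrix.one_mulVec]
end
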